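/- arXiv:2108.11946 — 3 statements merged into one kernel-verified Lean document; each statement's English description precedes it below -/
import Mathlib

section
/- Let G be a graph on n vertices with independence number α(G) < k, and let d ≥ 2 be a real number. If n ≥ 3·d^{k−1}, then G contains an induced subgraph on m vertices with m ≥ n/d^{k−1} whose minimum degree is at least (1 − 1/d)·m. -/
open Finset

/-- There is a copy (subgraph embedding) of `H` in `G` whose image lies in `A`. -/
def SimpleGraph.CopyIn {W V : Type*} (H : SimpleGraph W) (G : SimpleGraph V) (A : Set V) :
    Prop :=
  ∃ f : W → V, Function.Injective f ∧ (∀ a, f a ∈ A) ∧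
    ∀ ⦃a b⦄, H.Adj a b → G.Adj (f a) (f b)

/-- There is a copy of `H` in `G`. -/
def SimpleGraph.ContainsCopy {W V : Type*} (H : SimpleGraph W) (G : SimpleGraph V) : Prop :=
  H.CopyIn G Set.univ

/-- The disjoint union of `n` copies of `H`, denoted `nH` in the paper. -/
def SimpleGraph.nCopies {W : Type*} (n : ℕ) (H : SimpleGraph W) : SimpleGraph (Fin n × W) where
  Adj x y := x.1 = y.1 ∧ H.Adj x.2 y.2
  symm := ⟨fun x y h => ⟨h.1.symm, h.2.symm⟩⟩
  loopless := ⟨fun x h => H.loopless.irrefl x.2 h.2⟩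

/-- `N` is Ramsey for `H`: every red/blue colouring of the edges of `K_N` (encoded by its
red graph `R`, the blue graph being `Rᶜ`) contains a monochromatic copy of `H`. -/
def SimpleGraph.RamseyProp {W : Type*} (H : SimpleGraph W) (N : ℕ) : Prop :=
  ∀ R : SimpleGraph (Fin N), H.ContainsCopy R ∨ H.ContainsCopy Rᶜ

/-- The Ramsey number `r(H)`. -/
noncomputable def SimpleGraph.ramsey {W : Type*} (H : SimpleGraph W) : ℕ :=
  sInf {N | H.RamseyProp N}

/-- `I` is an independent set of `G`. -/
def SimpleGraph.IsIndep {V : Type*} (G : SimpleGraph V) (I : Set V) : Prop :=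
  I.Pairwise fun a b => ¬ G.Adj a b

/-- The independence number `α(G)`. -/
noncomputable def SimpleGraph.indepNumber {V : Type*} (G : SimpleGraph V) : ℕ :=
  sSup {n | ∃ I : Finset V, G.IsIndep ↑I ∧ I.card = n}

/-- `I` is an independent set of `G`, maximal with respect to inclusion. -/
def SimpleGraph.IsMaximalIndep {V : Type*} (G : SimpleGraph V) (I : Set V) : Prop :=
  G.IsIndep I ∧ ∀ J : Set V, G.IsIndep J → I ⊆ J → J = I

/-- `R` contains a copy of some member of the family `𝒟(G)` of graphs obtained from `G`
by removing a maximal independent set. -/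
def SimpleGraph.ContainsCopyOfD {V U : Type*} (G : SimpleGraph V) (R : SimpleGraph U) : Prop :=
  ∃ I : Set V, G.IsMaximalIndep I ∧ (G.induce Iᶜ).ContainsCopy R

/-- `R` contains a copy of some connected component of `H`, i.e. of a member of `𝒞(H)`. -/
def SimpleGraph.ContainsCopyOfComp {V U : Type*} (H : SimpleGraph V) (R : SimpleGraph U) :
    Prop :=
  ∃ c : H.ConnectedComponent, (H.induce c.supp).ContainsCopy R

/-- `R` contains a copy of some member of the family `𝒟_c(H)`: graphs obtained by removing a
maximal independent set of `H` and taking a connected component of the remainder. -/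
def SimpleGraph.ContainsCopyOfDc {V U : Type*} (H : SimpleGraph V) (R : SimpleGraph U) : Prop :=
  ∃ I : Set V, H.IsMaximalIndep I ∧
    ∃ c : (H.induce Iᶜ).ConnectedComponent, ((H.induce Iᶜ).induce c.supp).ContainsCopy R

/-- `R` contains a copy of some member of the family `𝒟'_c(H)`: graphs obtained by removing an
independent set of `H` of maximum size `α(H)` and taking a connected component of the
remainder. -/
def SimpleGraph.ContainsCopyOfDc' {V U : Type*} (H : SimpleGraph V) (R : SimpleGraph U) : Prop :=
  ∃ I : Set V, H.IsIndep I ∧ I.ncard = H.indepNumber ∧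
    ∃ c : (H.induce Iᶜ).ConnectedComponent, ((H.induce Iᶜ).induce c.supp).ContainsCopy R

/-- The asymmetric Ramsey number `r(G, H)`. -/
noncomputable def SimpleGraph.ramsey2 {V W : Type*} (G : SimpleGraph V) (H : SimpleGraph W) :
    ℕ :=
  sInf {N | ∀ R : SimpleGraph (Fin N), G.ContainsCopy R ∨ H.ContainsCopy Rᶜ}

/-- The Ramsey number `r(𝒟(G), H)`. -/
noncomputable def SimpleGraph.ramseyDFam {V W : Type*} (G : SimpleGraph V)
    (H : SimpleGraph W) : ℕ :=
  sInf {N | ∀ R : SimpleGraph (Fin N), G.ContainsCopyOfD R ∨ H.ContainsCopy Rᶜ}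

/-- The Ramsey number `r(𝒟(G), 𝒞(H))`. -/
noncomputable def SimpleGraph.ramseyDCFam {V W : Type*} (G : SimpleGraph V)
    (H : SimpleGraph W) : ℕ :=
  sInf {N | ∀ R : SimpleGraph (Fin N), G.ContainsCopyOfD R ∨ H.ContainsCopyOfComp Rᶜ}

/-- The Ramsey number `r(𝒟_c(H), 𝒟(H))`. -/
noncomputable def SimpleGraph.ramseyDcD {V : Type*} (H : SimpleGraph V) : ℕ :=
  sInf {N | ∀ R : SimpleGraph (Fin N), H.ContainsCopyOfDc R ∨ H.ContainsCopyOfD Rᶜ}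

/-- The Ramsey number `r(𝒟'_c(H), 𝒟(H))`. -/
noncomputable def SimpleGraph.ramseyDc'D {V : Type*} (H : SimpleGraph V) : ℕ :=
  sInf {N | ∀ R : SimpleGraph (Fin N), H.ContainsCopyOfDc' R ∨ H.ContainsCopyOfD Rᶜ}

/-- An `H`-tie in the colouring with red graph `Red`: a set of `2|H| - α(H)` vertices
containing both a red and a blue copy of `H`. -/
def SimpleGraph.IsTie {V : Type*} {k : ℕ} (H : SimpleGraph (Fin k)) (Red : SimpleGraph V)
    (S : Finset V) : Prop :=
  S.card = 2 * k - H.indepNumber ∧ H.CopyIn Red ↑S ∧ H.CopyIn Redᶜ ↑S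

/-- A `K_k`-tiling of `G`: pairwise disjoint `k`-cliques covering all but at most
`|G| mod k` vertices. -/
def SimpleGraph.HasKkTiling {V : Type*} [Fintype V] [DecidableEq V] (G : SimpleGraph V)
    (k : ℕ) : Prop :=
  ∃ T : Finset (Finset V), (∀ S ∈ T, G.IsNClique k S) ∧
    (T : Set (Finset V)).PairwiseDisjoint id ∧
    Fintype.card V - (T.biUnion id).card ≤ Fintype.card V % k

/-- A perfect `K_k`-tiling of `G`: pairwise disjoint `k`-cliques covering all vertices. -/
def SimpleGraph.HasPerfectKkTiling {V : Type*} [Fintype V] [DecidableEq V] (G : SimpleGraph V)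
    (k : ℕ) : Prop :=
  ∃ T : Finset (Finset V), (∀ S ∈ T, G.IsNClique k S) ∧
    (T : Set (Finset V)).PairwiseDisjoint id ∧ T.biUnion id = Finset.univ

/-- `a` and `b` are joined by an edge of colour `c` (where `true` is red and `false` is blue)
in the colouring with red graph `Red`. -/
def SimpleGraph.colorAdj {V : Type*} (Red : SimpleGraph V) (c : Bool) (a b : V) : Prop :=
  if c then Red.Adj a b else Redᶜ.Adj a b

private lemma aux_peel {V : Type*} [Fintype V] [DecidableEq V] (G : SimpleGraph V)
    [DecidableRel G.Adj] (d : ℝ) (hd : 2 ≤ d) :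
    ∀ k : ℕ, ∀ S : Finset V,
      (∀ I : Finset V, I ⊆ S → G.IsIndep ↑I → I.card < k) →
      ∃ T : Finset V, T ⊆ S ∧
        (∀ v ∈ T, (1 - 1 / d) * (T.card : ℝ) ≤ ((T.filter (G.Adj v)).card : ℝ)) ∧
        ∃ t : ℕ, t + 1 ≤ k ∧ (t + 1 = k → T = ∅) ∧
          (S.card : ℝ) / d ^ t - (2 - 2 / d ^ t) ≤ (T.card : ℝ) := by
  have hd0 : (0:ℝ) < d := by linarith
  intro k
  induction k with
  | zero =>
    intro S h
    exact absurd (h ∅ (empty_subset S) (by simp [SimpleGraph.IsIndep])) (by simp)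
  | succ k ih =>
    intro S h
    by_cases hmin : ∀ v ∈ S, (1 - 1 / d) * (S.card : ℝ) ≤ ((S.filter (G.Adj v)).card : ℝ)
    · refine ⟨S, subset_rfl, hmin, 0, by omega, ?_, by simp⟩
      intro h1
      have hk0 : k = 0 := by omega
      by_contra hne
      obtain ⟨v, hv⟩ := Finset.nonempty_iff_ne_empty.mpr hne
      have := h {v} (by simpa using hv) (by simp [SimpleGraph.IsIndep])
      simp [hk0] at this
    · push_neg at hmin
      obtain ⟨v, hvS, hdeg⟩ := hmin
      set S' := (S.erase v).filter (fun u => ¬ G.Adj v u) with hS'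
      have hS'sub : S' ⊆ S := (Finset.filter_subset _ _).trans (Finset.erase_subset _ _)
      have hind : ∀ I : Finset V, I ⊆ S' → G.IsIndep ↑I → I.card < k := by
        intro I hIS hI
        have hvI : v ∉ I := by
          intro hv
          have := hIS hv
          rw [hS', Finset.mem_filter] at this
          exact (Finset.mem_erase.mp this.1).1 rfl
        have hins : G.IsIndep ↑(insert v I) := by
          intro a ha b hb hne
          simp only [Finset.coe_insert, Set.mem_insert_iff, Finset.mem_coe] at ha hb
          rcases ha with rfl | ha
          · rcases hb with rfl | hb
            · exact absurd rfl hne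
            · exact (Finset.mem_filter.mp (hIS hb)).2
          · rcases hb with rfl | hb
            · intro hadj
              exact (Finset.mem_filter.mp (hIS ha)).2 (G.adj_symm hadj)
            · exact hI ha hb hne
        have hsub : insert v I ⊆ S := by
          intro x hx
          rcases Finset.mem_insert.mp hx with rfl | hx
          · exact hvS
          · exact hS'sub (hIS hx)
        have := h _ hsub hins
        rw [Finset.card_insert_of_notMem hvI] at this
        omega
      obtain ⟨T, hTS', hminT, t', ht'1, ht'2, hbd⟩ := ih S' hind
      refine ⟨T, hTS'.trans hS'sub, hminT, t' + 1, by omega, by intro h'; exact ht'2 (by omega), ?_⟩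
      -- size bookkeeping
      have hcard1 : ((S.erase v).filter (fun u => G.Adj v u)).card + S'.card = S.card - 1 := by
        rw [hS', Finset.card_filter_add_card_filter_not, Finset.card_erase_of_mem hvS]
      have hcard2 : ((S.erase v).filter (fun u => G.Adj v u)).card ≤ (S.filter (G.Adj v)).card :=
        Finset.card_le_card (Finset.filter_subset_filter _ (Finset.erase_subset _ _))
      have hS1 : 1 ≤ S.card := Finset.card_pos.mpr ⟨v, hvS⟩
      have hnat : S.card ≤ S'.card + (S.filter (G.Adj v)).card + 1 := by omega
      have hreal : (S.card : ℝ) ≤ (S'.card : ℝ) + ((S.filter (G.Adj v)).card : ℝ) + 1 := by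
        exact_mod_cast hnat
      have hexp : (1 - 1 / d) * (S.card : ℝ) = (S.card : ℝ) - (S.card : ℝ) / d := by ring
      have hb : (S.card : ℝ) / d - 1 ≤ (S'.card : ℝ) := by linarith
      have hD : (0:ℝ) < d ^ t' := pow_pos hd0 t'
      have hDd : (0:ℝ) < d ^ t' * d := mul_pos hD hd0
      have g1 : ((S'.card : ℝ) + 2) / d ^ t' ≤ (T.card : ℝ) + 2 := by
        have he : ((S'.card : ℝ) + 2) / d ^ t' = (S'.card : ℝ) / d ^ t' + 2 / d ^ t' := by ring
        linarith [hbd, he.le, he.ge]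
      have g2 : (S'.card : ℝ) + 2 ≤ ((T.card : ℝ) + 2) * d ^ t' := (div_le_iff₀ hD).mp g1
      have hcancel : (S.card : ℝ) / d * d = (S.card : ℝ) := div_mul_cancel₀ _ (ne_of_gt hd0)
      have g3 : (S.card : ℝ) + 2 ≤ ((T.card : ℝ) + 2) * (d ^ t' * d) := by
        have g2d : ((S'.card : ℝ) + 2) * d ≤ ((T.card : ℝ) + 2) * d ^ t' * d :=
          mul_le_mul_of_nonneg_right g2 (le_of_lt hd0)
        nlinarith [hb, hcancel, g2d]
      have g4 : ((S.card : ℝ) + 2) / (d ^ t' * d) ≤ (T.card : ℝ) + 2 := (div_le_iff₀ hDd).mpr g3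
      rw [pow_succ]
      have he2 : ((S.card : ℝ) + 2) / (d ^ t' * d)
          = (S.card : ℝ) / (d ^ t' * d) + 2 / (d ^ t' * d) := by ring
      linarith [g4, he2.le, he2.ge]

/-- Lemma 2.1. If `G` is an `n`-vertex graph with `α(G) < k` and `d ≥ 2`
is real with `n ≥ 3·d^(k-1)`, then `G` has an induced subgraph on `m ≥ n / d^(k-1)` vertices
with minimum degree at least `(1 - 1/d)·m`. -/
theorem exists_induced_subgraph_high_minDegree {V : Type*} [Fintype V] [DecidableEq V]
    (G : SimpleGraph V) [DecidableRel G.Adj] (n k : ℕ) (hn : Fintype.card V = n)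
    (hα : G.indepNumber < k) (d : ℝ) (hd : 2 ≤ d) (hbig : 3 * d ^ (k - 1) ≤ (n : ℝ)) :
    ∃ S : Finset V, ((n : ℝ) / d ^ (k - 1) ≤ (S.card : ℝ)) ∧
      ∀ v ∈ S, (1 - 1 / d) * (S.card : ℝ) ≤ ((S.filter (G.Adj v)).card : ℝ) := by
  have hd0 : (0:ℝ) < d := by linarith
  have hle : ∀ I : Finset V, G.IsIndep ↑I → I.card ≤ G.indepNumber := by
    intro I hI
    apply le_csSup
    · refine ⟨Fintype.card V, ?_⟩
      rintro m ⟨J, -, rfl⟩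
      simpa using J.card_le_univ
    · exact ⟨I, hI, rfl⟩
  obtain ⟨T, -, hminT, t, ht1, ht2, hbd⟩ := aux_peel G d hd k Finset.univ
    (fun I _ hI => lt_of_le_of_lt (hle I hI) hα)
  rw [Finset.card_univ, hn] at hbd
  have hDk : (0:ℝ) < d ^ (k - 1) := pow_pos hd0 _
  have hDt : (0:ℝ) < d ^ t := pow_pos hd0 _
  have hX3 : 3 ≤ (n : ℝ) / d ^ (k - 1) := (le_div_iff₀ hDk).mpr (by linarith)
  rcases eq_or_lt_of_le ht1 with heq | hlt
  · -- t + 1 = k, T = ∅, contradiction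
    exfalso
    have hT0 : T = ∅ := ht2 heq
    have htk : t = k - 1 := by omega
    rw [hT0, htk] at hbd
    simp only [Finset.card_empty, Nat.cast_zero] at hbd
    have h2 : (0:ℝ) < 2 / d ^ (k - 1) := by positivity
    linarith
  · -- t + 1 < k
    refine ⟨T, ?_, hminT⟩
    have htk : t + 1 ≤ k - 1 := by omega
    have hpow : d ^ (t + 1) ≤ d ^ (k - 1) := pow_le_pow_right₀ (by linarith) htk
    have hpow2 : 2 * d ^ t ≤ d ^ (k - 1) := by
      rw [pow_succ] at hpow
      nlinarith [hDt]
    have hn0 : (0:ℝ) ≤ (n : ℝ) := Nat.cast_nonneg n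
    have hkey : 2 * ((n : ℝ) / d ^ (k - 1)) ≤ (n : ℝ) / d ^ t := by
      rw [← mul_div_assoc, div_le_div_iff₀ hDk hDt]
      nlinarith [hpow2, hn0]
    have h2 : (0:ℝ) < 2 / d ^ t := by positivity
    linarith [hbd, hkey, hX3, h2]
end

section
/- Let m' ≥ m be positive integers and let G be a graph on m' vertices with minimum degree δ. Let d be a real number with m/2 ≤ d, and set r := (m·δ)/(m'·d), and suppose r ≥ 1 and m·m' < r^{⌊(r−1)d⌋}. Then G has an m-vertex subset S of its vertices with the property that every vertex of G has more than d neighbours in S. -/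
open Finset

set_option maxHeartbeats 1600000

private lemma poly_ineq (u v w : ℝ) (hu : 0 ≤ u) (hv : 0 ≤ v) (hw : 0 ≤ w) :
    v^2*((u+v+w+1)*(2*u+v+w)) ≤ (u+v)*((v+1)*(u+v+w)^2) := by
  nlinarith [mul_nonneg hu hv, mul_nonneg hv hw, mul_nonneg hu hw,
    mul_nonneg (mul_nonneg hu hv) hw, mul_nonneg (mul_nonneg hu hu) hv,
    mul_nonneg (mul_nonneg hu hu) hw, mul_nonneg (mul_nonneg hu hv) hv,
    mul_nonneg (mul_nonneg hv hv) hw, mul_nonneg (mul_nonneg hv hw) hw,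
    mul_nonneg (mul_nonneg hu hw) hw, mul_nonneg (mul_nonneg hu hu) hu,
    mul_nonneg (mul_nonneg (mul_nonneg hu hu) hu) hv,
    mul_nonneg (mul_nonneg (mul_nonneg hu hu) hv) hv,
    mul_nonneg (mul_nonneg (mul_nonneg hu hu) hv) hw,
    mul_nonneg (mul_nonneg (mul_nonneg hu hv) hv) hw,
    mul_nonneg (mul_nonneg (mul_nonneg hu hv) hw) hw]

set_option maxHeartbeats 1600000 in
private lemma crude (m d x : ℝ) (h1 : m/2 ≤ d) (h2 : d ≤ x) (h3 : x ≤ m) :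
    (m-x)^2*((d+1)*x) ≤ (m-d)*((m+1-x)*d^2) := by
  have h := poly_ineq (x-d) (m-x) (2*d-m) (by linarith) (by linarith) (by linarith)
  nlinarith [h]

set_option maxHeartbeats 1600000 in
private lemma star (m d x j n : ℝ) (hm2 : m/2 ≤ d) (hj0 : 0 ≤ j) (hjd : j ≤ d)
    (hn : 0 ≤ n) (hjn : j + n ≤ x) (hdx : d ≤ x) (hxm : x ≤ m) :
    (m-x)^2*((j+1)*(j+n)) ≤ (m-j)*((m+1-j-n)*d^2) := by
  have h := crude m d x hm2 hdx hxm
  calc (m-x)^2*((j+1)*(j+n)) ≤ (m-x)^2*((d+1)*x) := by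
        apply mul_le_mul_of_nonneg_left _ (sq_nonneg _)
        apply mul_le_mul (by linarith) (by linarith) (by linarith) (by linarith)
    _ ≤ (m-d)*((m+1-x)*d^2) := h
    _ ≤ (m-j)*((m+1-j-n)*d^2) := by
        apply mul_le_mul (by linarith) (mul_le_mul_of_nonneg_right (by linarith) (sq_nonneg d))
          (mul_nonneg (by linarith) (sq_nonneg d)) (by linarith)

set_option maxHeartbeats 1600000 in
private lemma pairbound (m d μ j n a b : ℝ) (hm2 : m/2 ≤ d) (hj0 : 0 ≤ j) (hjd : j ≤ d)
    (hn : 0 ≤ n) (hjn : j + n ≤ μ) (hdμ : d ≤ μ) (hμm : μ ≤ m)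
    (hab : a + b = 2*j+n+1) (ha1 : j+1 ≤ a) (ha2 : a ≤ j+n) (hb1 : j+1 ≤ b) :
    (m-μ)^2*(a*b) ≤ d^2*((m+1-a)*(m+1-b)) := by
  have hstar := star m d μ j n hm2 hj0 hjd hn hjn hdμ hμm
  have h1 : 0 ≤ d^2 - (m-μ)^2 := by nlinarith
  have h2 : 0 ≤ a*b - (j+1)*(j+n) := by nlinarith [mul_nonneg (by linarith : (0:ℝ) ≤ a-(j+1)) (by linarith : (0:ℝ) ≤ (j+n)-a)]
  have hb : b = 2*j+n+1-a := by linarith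
  subst hb
  nlinarith [hstar, mul_nonneg h1 h2]

set_option maxHeartbeats 1600000 in
private lemma step1 (m m' δ μ i : ℝ) (hm' : 0 < m') (hm0 : 0 ≤ m) (hμδ : m' * μ = m * δ)
    (hi : (i+1)*m' ≤ m*δ) (hδm' : δ ≤ m') :
    μ * ((m'-δ)-(m-(i+1))) ≤ (δ-i)*(m-μ) := by
  nlinarith [mul_nonneg hm0 (by linarith : (0:ℝ) ≤ m'-δ), mul_pos hm' hm', sq_nonneg (m'-δ)]

set_option maxHeartbeats 1600000 in
private lemma chain (m m' δ N j : ℕ) (d r : ℝ) (hm : 0 < m) (hmm : m ≤ m') (hδ : δ < m')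
    (hd : (m:ℝ)/2 ≤ d) (hμ : (m':ℝ)*(r*d) = (m:ℝ)*(δ:ℝ)) (hr1 : 1 ≤ r)
    (hjd : (j:ℝ) ≤ d) (hjN : ((j:ℝ)+(N:ℝ)) ≤ r*d) :
    r^N * ((δ.choose j * (m'-δ).choose (m-j) : ℕ) : ℝ)
      ≤ ((δ.choose (j+N) * (m'-δ).choose (m-(j+N)) : ℕ) : ℝ) := by
  have hm'0 : (0:ℝ) < m' := by
    have : (1:ℝ) ≤ m' := by exact_mod_cast Nat.one_le_iff_ne_zero.2 (by omega)
    linarith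
  have hm1 : (1:ℝ) ≤ m := by exact_mod_cast hm
  have hd0 : (0:ℝ) < d := by linarith
  have hr0 : (0:ℝ) < r := by linarith
  have hdμ : d ≤ r*d := le_mul_of_one_le_left hd0.le hr1
  have hμδ : r*d ≤ (δ:ℝ) := by
    have h1 : (m:ℝ) * δ ≤ (m':ℝ) * δ := by
      have : (m:ℝ) ≤ m' := by exact_mod_cast hmm
      apply mul_le_mul_of_nonneg_right this (by positivity)
    nlinarith [hμ]
  have hδm'r : (δ:ℝ) ≤ (m':ℝ) - 1 := by
    have : (δ:ℕ) + 1 ≤ m' := hδ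
    have := (Nat.cast_le (α := ℝ)).2 this
    push_cast at this; linarith
  have hμltm : r*d < (m:ℝ) := by nlinarith [hμ]
  have hjNm : j + N < m := by
    have : ((j+N : ℕ):ℝ) < m := by push_cast; linarith
    exact_mod_cast this
  have hjNδ : j + N ≤ δ := by
    have : ((j+N : ℕ):ℝ) ≤ δ := by push_cast; linarith
    exact_mod_cast this
  by_cases h0 : δ.choose j * (m'-δ).choose (m-j) = 0
  · rw [h0]; push_cast; simp; positivity
  -- positivity facts
  have hjδ : j ≤ δ := by
    by_contra h
    exact h0 (mul_eq_zero.mpr (Or.inl (Nat.choose_eq_zero_of_lt (by omega))))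
  have hmjn : m - j ≤ m' - δ := by
    by_contra h
    exact h0 (mul_eq_zero.mpr (Or.inr (Nat.choose_eq_zero_of_lt (by omega))))
  set Q : ℕ → ℝ := fun i => ((δ.choose i : ℕ) : ℝ) * (((m'-δ).choose (m-i) : ℕ) : ℝ) with hQ
  have hQpos : ∀ i, j ≤ i → i ≤ j+N → 0 < Q i := by
    intro i h1 h2
    have c1 : 0 < δ.choose i := Nat.choose_pos (by omega)
    have c2 : 0 < (m'-δ).choose (m-i) := Nat.choose_pos (by omega)
    have := mul_pos c1 c2
    simp only [hQ]
    positivity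
  have hident : ∀ i, j ≤ i → i+1 ≤ j+N →
      ((δ:ℝ)-i)*(((m:ℝ)-i)*Q i)
        = ((i:ℝ)+1)*(((((m':ℝ)-δ)-((m:ℝ)-((i:ℝ)+1))))*Q (i+1)) := by
    intro i h1 h2
    have hiδ : i+1 ≤ δ := by omega
    have him : i+1 < m := by omega
    have hA := Nat.choose_succ_right_eq δ i
    have hAr : ((δ.choose (i+1) : ℕ):ℝ) * ((i:ℝ)+1) = ((δ.choose i : ℕ):ℝ) * ((δ:ℝ) - i) := by
      have := congrArg (Nat.cast (R := ℝ)) hA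
      push_cast [Nat.cast_sub (by omega : i ≤ δ)] at this
      linarith [this]
    have hB := Nat.choose_succ_right_eq (m'-δ) (m-(i+1))
    rw [show m-(i+1)+1 = m-i from by omega] at hB
    have hBr : (((m'-δ).choose (m-i) : ℕ):ℝ) * ((m:ℝ)-i)
        = (((m'-δ).choose (m-(i+1)) : ℕ):ℝ) * (((m':ℝ)-δ) - ((m:ℝ)-((i:ℝ)+1))) := by
      have := congrArg (Nat.cast (R := ℝ)) hB
      push_cast [Nat.cast_sub (by omega : m-(i+1) ≤ m'-δ),
        Nat.cast_sub (by omega : i+1 ≤ m), Nat.cast_sub (by omega : i ≤ m),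
        Nat.cast_sub (by omega : δ ≤ m')] at this
      linarith [this]
    simp only [hQ]
    linear_combination (-(((m:ℝ)-i) * (((m'-δ).choose (m-i) : ℕ):ℝ))) * hAr
      + (((i:ℝ)+1) * ((δ.choose (i+1) : ℕ):ℝ)) * hBr
  have hEpos : ∀ i, j ≤ i → i+1 ≤ j+N → 0 < ((m':ℝ)-δ) - ((m:ℝ)-((i:ℝ)+1)) := by
    intro i h1 h2
    have hQi := hQpos i h1 (by omega)
    have hQi1 := hQpos (i+1) (by omega) h2
    have hδi : (i:ℝ) < δ := by
      have : i < δ := by omega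
      exact_mod_cast this
    have hmi : (i:ℝ) < m := by
      have : i < m := by omega
      exact_mod_cast this
    have hpos : 0 < ((δ:ℝ)-i)*(((m:ℝ)-i)*Q i) := by
      apply mul_pos (by linarith) (mul_pos (by linarith) hQi)
    rw [hident i h1 h2] at hpos
    by_contra hc
    push_neg at hc
    have h4 : ((i:ℝ)+1) * ((((m':ℝ)-δ)-((m:ℝ)-((i:ℝ)+1)))*Q (i+1)) ≤ 0 :=
      mul_nonpos_of_nonneg_of_nonpos (by positivity)
        (mul_nonpos_of_nonpos_of_nonneg hc hQi1.le)
    linarith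
  rcases Nat.eq_zero_or_pos N with hN0 | hN1
  · subst hN0; norm_num
  obtain ⟨N', rfl⟩ : ∃ N', N = N'+1 := ⟨N-1, by omega⟩
  have hpair : ∀ k, k < N'+1 →
      r^2 * (Q (j+k) * Q (j+(N'-k))) ≤ Q ((j+k)+1) * Q ((j+(N'-k))+1) := by
    intro k hk
    set i := j + k with hi
    set i2 := j + (N'-k) with hi2
    have h1i : j ≤ i := by omega
    have h2i : i + 1 ≤ j + (N'+1) := by omega
    have h1i2 : j ≤ i2 := by omega
    have h2i2 : i2 + 1 ≤ j + (N'+1) := by omega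
    have hcast : ∀ a : ℕ, a ≤ j + (N'+1) → (a:ℝ) ≤ r*d := by
      intro a ha
      calc (a:ℝ) ≤ ((j + (N'+1) : ℕ) : ℝ) := by exact_mod_cast ha
        _ ≤ r*d := by push_cast at hjN ⊢; linarith
    have hEi := hEpos i h1i h2i
    have hEi2 := hEpos i2 h1i2 h2i2
    have hQi := hQpos i h1i (by omega)
    have hQi2 := hQpos i2 h1i2 (by omega)
    have hQi1 := hQpos (i+1) (by omega) h2i
    have hQi21 := hQpos (i2+1) (by omega) h2i2
    have hidi := hident i h1i h2i
    have hidi2 := hident i2 h1i2 h2i2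
    have hδi : (0:ℝ) < (δ:ℝ) - i := by
      have : (i:ℕ) < δ := by omega
      have := (Nat.cast_lt (α := ℝ)).2 this; linarith
    have hδi2 : (0:ℝ) < (δ:ℝ) - i2 := by
      have : (i2:ℕ) < δ := by omega
      have := (Nat.cast_lt (α := ℝ)).2 this; linarith
    have hmrd : (0:ℝ) ≤ (m:ℝ) - r*d := by linarith
    have hile : ((i:ℝ)+1) ≤ r*d := by
      have := hcast (i+1) (by omega); push_cast at this; linarith
    have hi2le : ((i2:ℝ)+1) ≤ r*d := by
      have := hcast (i2+1) (by omega); push_cast at this; linarith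
    have hia : ((i:ℝ)+1)*(m':ℝ) ≤ (m:ℝ)*(δ:ℝ) := by
      nlinarith [mul_le_mul_of_nonneg_right hile hm'0.le, hμ]
    have hia2 : ((i2:ℝ)+1)*(m':ℝ) ≤ (m:ℝ)*(δ:ℝ) := by
      nlinarith [mul_le_mul_of_nonneg_right hi2le hm'0.le, hμ]
    have hs1 : (r*d) * (((m':ℝ)-δ)-((m:ℝ)-((i:ℝ)+1))) ≤ ((δ:ℝ)-i)*((m:ℝ)-(r*d)) :=
      step1 (m:ℝ) (m':ℝ) (δ:ℝ) (r*d) (i:ℝ) hm'0 (by linarith) hμ hia (by linarith)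
    have hs2 : (r*d) * (((m':ℝ)-δ)-((m:ℝ)-((i2:ℝ)+1))) ≤ ((δ:ℝ)-i2)*((m:ℝ)-(r*d)) :=
      step1 (m:ℝ) (m':ℝ) (δ:ℝ) (r*d) (i2:ℝ) hm'0 (by linarith) hμ hia2 (by linarith)
    have hnat : i + i2 = 2*j + N' := by omega
    have habr : ((i:ℝ)+1)+((i2:ℝ)+1) = 2*(j:ℝ)+(((N'+1:ℕ)):ℝ)+1 := by
      have := congrArg (Nat.cast (R := ℝ)) hnat
      push_cast at this ⊢; linarith
    have hpb := pairbound (m:ℝ) d (r*d) (j:ℝ) ((N'+1:ℕ):ℝ) ((i:ℝ)+1) ((i2:ℝ)+1)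
      hd (by positivity) hjd (by positivity) (by push_cast at hjN ⊢; linarith) hdμ hμltm.le
      habr (by have := (Nat.cast_le (α := ℝ)).2 h1i; linarith)
      (by have := (Nat.cast_le (α := ℝ)).2 h2i; push_cast at this ⊢; linarith)
      (by have := (Nat.cast_le (α := ℝ)).2 h1i2; linarith)
    have hpb' : ((m:ℝ)-(r*d))^2*((((i:ℝ)+1))*(((i2:ℝ)+1)))
        ≤ d^2*(((m:ℝ)-i)*((m:ℝ)-i2)) := by linear_combination hpb
    have hmul : ((r*d) * (((m':ℝ)-δ)-((m:ℝ)-((i:ℝ)+1)))) * ((r*d) * (((m':ℝ)-δ)-((m:ℝ)-((i2:ℝ)+1))))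
        ≤ (((δ:ℝ)-i)*((m:ℝ)-(r*d))) * (((δ:ℝ)-i2)*((m:ℝ)-(r*d))) := by
      apply mul_le_mul hs1 hs2 (mul_nonneg (by positivity) hEi2.le) (mul_nonneg hδi.le hmrd)
    have hcored : (r^2 * ((((i:ℝ)+1)*(((m':ℝ)-δ)-((m:ℝ)-((i:ℝ)+1))))*(((i2:ℝ)+1)*(((m':ℝ)-δ)-((m:ℝ)-((i2:ℝ)+1))))))*d^2
        ≤ ((((δ:ℝ)-i)*((m:ℝ)-i))*(((δ:ℝ)-i2)*((m:ℝ)-i2)))*d^2 := by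
      calc (r^2 * ((((i:ℝ)+1)*(((m':ℝ)-δ)-((m:ℝ)-((i:ℝ)+1))))*(((i2:ℝ)+1)*(((m':ℝ)-δ)-((m:ℝ)-((i2:ℝ)+1))))))*d^2
          = (((i:ℝ)+1)*((i2:ℝ)+1))*(((r*d) * (((m':ℝ)-δ)-((m:ℝ)-((i:ℝ)+1)))) * ((r*d) * (((m':ℝ)-δ)-((m:ℝ)-((i2:ℝ)+1))))) := by ring
        _ ≤ (((i:ℝ)+1)*((i2:ℝ)+1))*((((δ:ℝ)-i)*((m:ℝ)-(r*d))) * (((δ:ℝ)-i2)*((m:ℝ)-(r*d)))) :=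
            mul_le_mul_of_nonneg_left hmul (by positivity)
        _ = (((δ:ℝ)-i)*((δ:ℝ)-i2))*(((m:ℝ)-(r*d))^2*((((i:ℝ)+1))*(((i2:ℝ)+1)))) := by ring
        _ ≤ (((δ:ℝ)-i)*((δ:ℝ)-i2))*(d^2*(((m:ℝ)-i)*((m:ℝ)-i2))) :=
            mul_le_mul_of_nonneg_left hpb' (mul_nonneg hδi.le hδi2.le)
        _ = ((((δ:ℝ)-i)*((m:ℝ)-i))*(((δ:ℝ)-i2)*((m:ℝ)-i2)))*d^2 := by ring
    have hcore : r^2 * ((((i:ℝ)+1)*(((m':ℝ)-δ)-((m:ℝ)-((i:ℝ)+1))))*(((i2:ℝ)+1)*(((m':ℝ)-δ)-((m:ℝ)-((i2:ℝ)+1)))))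
        ≤ (((δ:ℝ)-i)*((m:ℝ)-i))*(((δ:ℝ)-i2)*((m:ℝ)-i2)) :=
      le_of_mul_le_mul_right hcored (by positivity)
    have hkey : (Q (i+1) * Q (i2+1)) * ((((i:ℝ)+1)*(((m':ℝ)-δ)-((m:ℝ)-((i:ℝ)+1))))*(((i2:ℝ)+1)*(((m':ℝ)-δ)-((m:ℝ)-((i2:ℝ)+1)))))
        = ((((δ:ℝ)-i)*((m:ℝ)-i))*(((δ:ℝ)-i2)*((m:ℝ)-i2))) * (Q i * Q i2) := by
      linear_combination (-(((i2:ℝ)+1)*((((m':ℝ)-δ)-((m:ℝ)-((i2:ℝ)+1)))*Q (i2+1))))*hidi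
        + (-(((δ:ℝ)-i)*(((m:ℝ)-i)*Q i)))*hidi2
    have hfin : (r^2 * (Q i * Q i2)) * ((((i:ℝ)+1)*(((m':ℝ)-δ)-((m:ℝ)-((i:ℝ)+1))))*(((i2:ℝ)+1)*(((m':ℝ)-δ)-((m:ℝ)-((i2:ℝ)+1)))))
        ≤ (Q (i+1) * Q (i2+1)) * ((((i:ℝ)+1)*(((m':ℝ)-δ)-((m:ℝ)-((i:ℝ)+1))))*(((i2:ℝ)+1)*(((m':ℝ)-δ)-((m:ℝ)-((i2:ℝ)+1))))) := by
      rw [hkey]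
      calc (r^2 * (Q i * Q i2)) * ((((i:ℝ)+1)*(((m':ℝ)-δ)-((m:ℝ)-((i:ℝ)+1))))*(((i2:ℝ)+1)*(((m':ℝ)-δ)-((m:ℝ)-((i2:ℝ)+1)))))
          = (r^2 * ((((i:ℝ)+1)*(((m':ℝ)-δ)-((m:ℝ)-((i:ℝ)+1))))*(((i2:ℝ)+1)*(((m':ℝ)-δ)-((m:ℝ)-((i2:ℝ)+1)))))) * (Q i * Q i2) := by ring
        _ ≤ ((((δ:ℝ)-i)*((m:ℝ)-i))*(((δ:ℝ)-i2)*((m:ℝ)-i2))) * (Q i * Q i2) :=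
            mul_le_mul_of_nonneg_right hcore (mul_nonneg hQi.le hQi2.le)
    exact le_of_mul_le_mul_right hfin (by positivity)
  have hprodle : ∏ k ∈ range (N'+1), (r^2 * (Q (j+k) * Q (j+(N'-k))))
      ≤ ∏ k ∈ range (N'+1), (Q ((j+k)+1) * Q ((j+(N'-k))+1)) := by
    apply Finset.prod_le_prod
    · intro k hk
      have h1 := hQpos (j+k) (by omega) (by simp at hk; omega)
      have h2 := hQpos (j+(N'-k)) (by omega) (by omega)
      positivity
    · intro k hk
      exact hpair k (mem_range.mp hk)
  have hrefl1 : ∏ k ∈ range (N'+1), Q (j+(N'-k)) = ∏ k ∈ range (N'+1), Q (j+k) := by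
    rw [← Finset.prod_range_reflect (fun k => Q (j+k)) (N'+1)]
    exact Finset.prod_congr rfl fun k hk => rfl
  have hrefl2 : ∏ k ∈ range (N'+1), Q ((j+(N'-k))+1) = ∏ k ∈ range (N'+1), Q ((j+k)+1) := by
    rw [← Finset.prod_range_reflect (fun k => Q ((j+k)+1)) (N'+1)]
    exact Finset.prod_congr rfl fun k hk => rfl
  set X := ∏ k ∈ range (N'+1), Q (j+k) with hX
  set Y := ∏ k ∈ range (N'+1), Q ((j+k)+1) with hY
  have hXpos : 0 < X := Finset.prod_pos fun k hk => hQpos (j+k) (by omega) (by simp at hk; omega)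
  have hYpos : 0 < Y := Finset.prod_pos fun k hk => hQpos ((j+k)+1) (by omega) (by simp at hk; omega)
  have hsq : (r^(N'+1)*X)^2 ≤ Y^2 := by
    have hL : ∏ k ∈ range (N'+1), (r^2 * (Q (j+k) * Q (j+(N'-k)))) = (r^(N'+1)*X)^2 := by
      rw [Finset.prod_mul_distrib, Finset.prod_mul_distrib, Finset.prod_const, hrefl1, ← hX,
        Finset.card_range]
      ring
    have hR : ∏ k ∈ range (N'+1), (Q ((j+k)+1) * Q ((j+(N'-k))+1)) = Y^2 := by
      rw [Finset.prod_mul_distrib, hrefl2, ← hY]; ring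
    rw [← hL, ← hR]; exact hprodle
  have hXY : r^(N'+1)*X ≤ Y := le_of_pow_le_pow_left₀ two_ne_zero hYpos.le hsq
  set M := ∏ k ∈ range N', Q ((j+k)+1) with hM
  have hMpos : 0 < M := Finset.prod_pos fun k hk => hQpos ((j+k)+1) (by omega) (by simp at hk; omega)
  have hXdec : X = M * Q j := by
    rw [hX, Finset.prod_range_succ']
    congr 1
  have hYdec : Y = M * Q ((j+N')+1) := by rw [hY, Finset.prod_range_succ]
  have hfinal : M * (r^(N'+1) * Q j) ≤ M * Q ((j+N')+1) := by
    calc M * (r^(N'+1) * Q j) = r^(N'+1) * X := by rw [hXdec]; ring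
      _ ≤ Y := hXY
      _ = M * Q ((j+N')+1) := hYdec
  have := le_of_mul_le_mul_left hfinal hMpos
  push_cast
  calc r^(N'+1) * (((δ.choose j : ℕ):ℝ) * (((m'-δ).choose (m-j) : ℕ):ℝ)) = r^(N'+1) * Q j := by rw [hQ]
    _ ≤ Q ((j+N')+1) := this
    _ = ((δ.choose (j+(N'+1)) : ℕ):ℝ) * (((m'-δ).choose (m-(j+(N'+1))) : ℕ):ℝ) := by
        rw [hQ, show (j+N')+1 = j+(N'+1) from by omega]

set_option maxHeartbeats 1600000 in
private lemma count_inter {V : Type*} [Fintype V] [DecidableEq V] (A : Finset V) (mm jj : ℕ) :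
    ((Finset.univ.powersetCard mm).filter (fun S : Finset V => (S ∩ A).card = jj)).card
      ≤ (A.card.choose jj) * ((Fintype.card V - A.card).choose (mm - jj)) := by
  have h := Finset.card_le_card_of_injOn
    (s := (Finset.univ.powersetCard mm).filter (fun S : Finset V => (S ∩ A).card = jj))
    (f := fun S : Finset V => (S ∩ A, S \ A))
    (t := (A.powersetCard jj) ×ˢ (Aᶜ.powersetCard (mm - jj)))
    (by
      intro S hS
      rw [Finset.mem_coe, mem_filter, Finset.mem_powersetCard_univ] at hS
      obtain ⟨hcard, hj⟩ := hS
      simp only [Finset.mem_coe, Finset.mem_product, Finset.mem_powersetCard]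
      refine ⟨⟨inter_subset_right, hj⟩, ?_, ?_⟩
      · intro x hx
        simp only [Finset.mem_sdiff] at hx
        simp [Finset.mem_compl, hx.2]
      · have := Finset.card_inter_add_card_sdiff S A
        omega)
    (by
      intro S1 h1 S2 h2 hEq
      simp only [Prod.mk.injEq] at hEq
      have e1 : S1 ∩ A ∪ S1 \ A = S1 := by
        ext x; simp only [Finset.mem_union, Finset.mem_inter, Finset.mem_sdiff]; tauto
      have e2 : S2 ∩ A ∪ S2 \ A = S2 := by
        ext x; simp only [Finset.mem_union, Finset.mem_inter, Finset.mem_sdiff]; tauto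
      rw [← e1, ← e2, hEq.1, hEq.2])
  calc ((Finset.univ.powersetCard mm).filter (fun S : Finset V => (S ∩ A).card = jj)).card
      ≤ ((A.powersetCard jj) ×ˢ (Aᶜ.powersetCard (mm - jj))).card := h
    _ = (A.card.choose jj) * ((Fintype.card V - A.card).choose (mm - jj)) := by
        rw [Finset.card_product, Finset.card_powersetCard, Finset.card_powersetCard,
          Finset.card_compl]

set_option maxHeartbeats 1600000 in
private lemma vandermonde_term (a n k mm : ℕ) (hk : k ≤ mm) :
    a.choose k * n.choose (mm-k) ≤ (a+n).choose mm := by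
  rw [Nat.add_choose_eq]
  exact Finset.single_le_sum (f := fun p : ℕ × ℕ => a.choose p.1 * n.choose p.2)
    (fun p _ => Nat.zero_le _) (show (k, mm-k) ∈ Finset.HasAntidiagonal.antidiagonal mm from Finset.HasAntidiagonal.mem_antidiagonal.mpr (by omega))

/-- Lemma 2.3. Let `m' ≥ m` be positive, `G` an `m'`-vertex graph with
minimum degree `δ`, `d` real with `m/2 ≤ d`, `r = mδ/(m'd) ≥ 1` and `m·m' < r^⌊(r-1)d⌋`.
Then `G` has an `m`-vertex subset `S` such that every vertex of `G` has more than `d`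
neighbours in `S`. -/
theorem exists_good_subset {V : Type*} [Fintype V] [DecidableEq V] (G : SimpleGraph V)
    [DecidableRel G.Adj] (m m' δ : ℕ) (hm : 0 < m) (hmm : m ≤ m')
    (hcard : Fintype.card V = m') (hδ : G.minDegree = δ)
    (d r : ℝ) (hd : (m : ℝ) / 2 ≤ d) (hr : r = ((m : ℝ) * δ) / ((m' : ℝ) * d))
    (hr1 : 1 ≤ r) (hmain : (m : ℝ) * (m' : ℝ) < r ^ ⌊(r - 1) * d⌋₊) :
    ∃ S : Finset V, S.card = m ∧ ∀ v : V, d < ((S.filter (G.Adj v)).card : ℝ) := by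
  classical
  set t := ⌊d⌋₊ with ht
  set N := ⌊(r - 1) * d⌋₊ with hN
  have hm'pos : 0 < m' := lt_of_lt_of_le hm hmm
  have hm1 : (1:ℝ) ≤ m := by exact_mod_cast hm
  have hm'0 : (0:ℝ) < m' := by exact_mod_cast hm'pos
  have hd0 : (0:ℝ) < d := by linarith
  have hr0 : (0:ℝ) < r := by linarith
  have hμ : (m':ℝ)*(r*d) = (m:ℝ)*(δ:ℝ) := by
    rw [hr]; field_simp
  have hV : Nonempty V := by
    rw [← Fintype.card_pos_iff, hcard]; exact hm'pos
  have hδlt : δ < m' := by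
    obtain ⟨v⟩ := hV
    calc δ = G.minDegree := hδ.symm
      _ ≤ G.degree v := G.minDegree_le_degree v
      _ < Fintype.card V := G.degree_lt_card_verts v
      _ = m' := hcard
  have hδm'r : (δ:ℝ) ≤ (m':ℝ) - 1 := by
    have : ((δ+1:ℕ):ℝ) ≤ m' := by exact_mod_cast hδlt
    push_cast at this; linarith
  have hdμ : d ≤ r*d := le_mul_of_one_le_left hd0.le hr1
  have hμltm : r*d < (m:ℝ) := by nlinarith [hμ]
  have htd : (t:ℝ) ≤ d := Nat.floor_le hd0.le
  have hNd : (N:ℝ) ≤ (r-1)*d := Nat.floor_le (by nlinarith)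
  have htm : t < m := by
    rw [ht]
    exact Nat.floor_lt hd0.le |>.mpr (by linarith)
  -- the per-term bound
  have hC0 : 0 < m'.choose m := Nat.choose_pos hmm
  have hC0r : (0:ℝ) < (m'.choose m : ℕ) := by exact_mod_cast hC0
  have hrN : (0:ℝ) < r^N := pow_pos hr0 N
  have qbound : ∀ j, j ≤ t →
      ((δ.choose j * (m'-δ).choose (m-j) : ℕ) : ℝ) * r^N ≤ ((m'.choose m : ℕ) : ℝ) := by
    intro j hj
    have hjd : (j:ℝ) ≤ d := le_trans (by exact_mod_cast hj) htd
    have hjN : ((j:ℝ)+(N:ℝ)) ≤ r*d := by linarith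
    have h1 := chain m m' δ N j d r hm hmm hδlt hd hμ hr1 hjd hjN
    have hjNm : j + N ≤ m := by
      have : ((j+N:ℕ):ℝ) < m := by push_cast; linarith
      have := this.le
      exact_mod_cast (by exact_mod_cast (le_of_lt (show ((j+N:ℕ):ℝ) < m by push_cast; linarith)) : ((j+N:ℕ):ℝ) ≤ (m:ℝ))
    have h2 : (δ.choose (j+N) * (m'-δ).choose (m-(j+N)) : ℕ) ≤ m'.choose m := by
      have := vandermonde_term δ (m'-δ) (j+N) m hjNm
      rwa [Nat.add_sub_cancel' hδlt.le] at this
    have h2r : ((δ.choose (j+N) * (m'-δ).choose (m-(j+N)) : ℕ) : ℝ) ≤ ((m'.choose m : ℕ):ℝ) := by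
      exact_mod_cast h2
    calc ((δ.choose j * (m'-δ).choose (m-j) : ℕ) : ℝ) * r^N
        = r^N * ((δ.choose j * (m'-δ).choose (m-j) : ℕ) : ℝ) := by ring
      _ ≤ ((δ.choose (j+N) * (m'-δ).choose (m-(j+N)) : ℕ) : ℝ) := h1
      _ ≤ _ := h2r
  -- counting bad sets
  set 𝒮 : Finset (Finset V) := Finset.univ.powersetCard m with h𝒮
  have h𝒮card : 𝒮.card = m'.choose m := by
    rw [h𝒮, Finset.card_powersetCard, Finset.card_univ, hcard]
  set bad : V → Finset (Finset V) :=
    fun v => 𝒮.filter (fun S => (S.filter (G.Adj v)).card ≤ t) with hbaddef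
  have hbad : ∀ v : V, (bad v).card ≤ ∑ j ∈ range (t+1), δ.choose j * (m'-δ).choose (m-j) := by
    intro v
    have hdeg : δ ≤ (G.neighborFinset v).card := by
      rw [G.card_neighborFinset_eq_degree]
      exact hδ ▸ G.minDegree_le_degree v
    obtain ⟨A, hAsub, hAcard⟩ := Finset.exists_subset_card_eq hdeg
    have hsub : bad v ⊆ (range (t+1)).biUnion
        (fun j => 𝒮.filter (fun S => (S ∩ A).card = j)) := by
      intro S hS
      rw [hbaddef, mem_filter] at hS
      have hle : (S ∩ A).card ≤ t := by
        refine le_trans (Finset.card_le_card ?_) hS.2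
        intro x hx
        rw [Finset.mem_inter] at hx
        rw [Finset.mem_filter]
        exact ⟨hx.1, (G.mem_neighborFinset v x).mp (hAsub hx.2)⟩
      exact Finset.mem_biUnion.mpr ⟨(S ∩ A).card, Finset.mem_range.mpr (by omega),
        Finset.mem_filter.mpr ⟨hS.1, rfl⟩⟩
    calc (bad v).card ≤ _ := Finset.card_le_card hsub
      _ ≤ ∑ j ∈ range (t+1), (𝒮.filter (fun S => (S ∩ A).card = j)).card :=
          Finset.card_biUnion_le
      _ ≤ ∑ j ∈ range (t+1), δ.choose j * (m'-δ).choose (m-j) := by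
          apply Finset.sum_le_sum
          intro j _
          have := count_inter A m j
          rwa [hAcard, hcard] at this
  -- total bound
  have hsumq : (∑ j ∈ range (t+1), (δ.choose j * (m'-δ).choose (m-j) : ℕ) : ℝ) * r^N
      ≤ (t+1) * ((m'.choose m : ℕ):ℝ) := by
    push_cast
    rw [Finset.sum_mul]
    calc ∑ j ∈ range (t+1), ((δ.choose j : ℝ) * ((m'-δ).choose (m-j) : ℝ)) * r^N
        ≤ ∑ _j ∈ range (t+1), ((m'.choose m : ℕ):ℝ) := by
          apply Finset.sum_le_sum
          intro j hj
          have := qbound j (by simp at hj; omega)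
          push_cast at this
          exact this
      _ = (t+1) * ((m'.choose m : ℕ):ℝ) := by
          rw [Finset.sum_const, Finset.card_range]; push_cast; ring
  have htotal : (∑ v : V, ((bad v).card : ℝ)) < (𝒮.card : ℝ) := by
    have h1 : (∑ v : V, ((bad v).card : ℝ))
        ≤ (m' : ℝ) * (∑ j ∈ range (t+1), (δ.choose j * (m'-δ).choose (m-j) : ℕ) : ℝ) := by
      calc (∑ v : V, ((bad v).card : ℝ))
          ≤ ∑ _v : V, (∑ j ∈ range (t+1), (δ.choose j * (m'-δ).choose (m-j) : ℕ) : ℝ) := by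
            apply Finset.sum_le_sum
            intro v _
            exact_mod_cast hbad v
        _ = (m' : ℝ) * _ := by
            rw [Finset.sum_const, Finset.card_univ, hcard]; push_cast; ring
    have h2 : (∑ v : V, ((bad v).card : ℝ)) * r^N ≤ (m' : ℝ) * ((t+1) * ((m'.choose m : ℕ):ℝ)) := by
      calc (∑ v : V, ((bad v).card : ℝ)) * r^N
          ≤ ((m' : ℝ) * (∑ j ∈ range (t+1), (δ.choose j * (m'-δ).choose (m-j) : ℕ) : ℝ)) * r^N :=
            mul_le_mul_of_nonneg_right h1 hrN.le
        _ = (m':ℝ) * ((∑ j ∈ range (t+1), (δ.choose j * (m'-δ).choose (m-j) : ℕ) : ℝ) * r^N) := by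
            ring
        _ ≤ (m' : ℝ) * ((t+1) * ((m'.choose m : ℕ):ℝ)) :=
            mul_le_mul_of_nonneg_left hsumq hm'0.le
    have h3 : (m' : ℝ) * ((t+1) * ((m'.choose m : ℕ):ℝ)) ≤ (m':ℝ) * ((m:ℝ) * ((m'.choose m : ℕ):ℝ)) := by
      apply mul_le_mul_of_nonneg_left _ hm'0.le
      apply mul_le_mul_of_nonneg_right _ hC0r.le
      have : ((t+1:ℕ):ℝ) ≤ (m:ℝ) := by exact_mod_cast htm
      push_cast at this; linarith
    have h4 : (m':ℝ) * ((m:ℝ) * ((m'.choose m : ℕ):ℝ)) < r^N * ((m'.choose m : ℕ):ℝ) := by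
      have := mul_lt_mul_of_pos_right hmain hC0r
      calc (m':ℝ) * ((m:ℝ) * ((m'.choose m : ℕ):ℝ)) = ((m:ℝ)*(m':ℝ)) * ((m'.choose m : ℕ):ℝ) := by ring
        _ < r^N * ((m'.choose m : ℕ):ℝ) := this
    have h5 : (∑ v : V, ((bad v).card : ℝ)) * r^N < ((m'.choose m : ℕ):ℝ) * r^N := by
      calc (∑ v : V, ((bad v).card : ℝ)) * r^N ≤ (m' : ℝ) * ((t+1) * ((m'.choose m : ℕ):ℝ)) := h2
        _ ≤ (m':ℝ) * ((m:ℝ) * ((m'.choose m : ℕ):ℝ)) := h3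
        _ < r^N * ((m'.choose m : ℕ):ℝ) := h4
        _ = ((m'.choose m : ℕ):ℝ) * r^N := by ring
    rw [h𝒮card]
    calc (∑ v : V, ((bad v).card : ℝ)) < ((m'.choose m : ℕ):ℝ) := lt_of_mul_lt_mul_right h5 hrN.le
      _ = _ := rfl
  -- find a good S
  have hgood : ∃ S ∈ 𝒮, ∀ v : V, S ∉ bad v := by
    by_contra hcon
    push_neg at hcon
    have hsub : 𝒮 ⊆ Finset.univ.biUnion bad := by
      intro S hS
      obtain ⟨v, hv⟩ := hcon S hS
      exact Finset.mem_biUnion.mpr ⟨v, Finset.mem_univ v, hv⟩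
    have h6 : (𝒮.card : ℝ) ≤ ∑ v : V, ((bad v).card : ℝ) := by
      have : 𝒮.card ≤ ∑ v : V, (bad v).card :=
        le_trans (Finset.card_le_card hsub) Finset.card_biUnion_le
      exact_mod_cast this
    linarith
  obtain ⟨S, hS𝒮, hSgood⟩ := hgood
  refine ⟨S, Finset.mem_powersetCard_univ.mp hS𝒮, ?_⟩
  intro v
  have := hSgood v
  rw [hbaddef, mem_filter] at this
  push_neg at this
  have h7 : t < (S.filter (G.Adj v)).card := this hS𝒮
  have h8 : ((t:ℝ)+1) ≤ ((S.filter (G.Adj v)).card : ℝ) := by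
    have : t+1 ≤ (S.filter (G.Adj v)).card := h7
    exact_mod_cast this
  have h9 : d < (t:ℝ)+1 := by
    have := Nat.lt_floor_add_one d
    push_cast at this ⊢
    rw [ht]; exact_mod_cast this
  linarith
end

section
/- Let G be a graph with at least one edge and let H be a connected graph. Then for every positive integer n, the asymmetric Ramsey number satisfies r(G, nH) ≥ n·|H| + r(𝒟(G), H) − 1. In particular, there is a 2-colouring of the edges of the complete graph on n·|H| + r(𝒟(G), H) − 2 vertices with no red copy of G and no blue copy of nH. -/
open Finset

/-! ### Auxiliary lemmas -/

private def ramN : ℕ → ℕ → ℕ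
  | 0, _ => 0
  | _+1, 0 => 0
  | s+1, t+1 => ramN s (t+1) + ramN (s+1) t + 1

private lemma ramsey_step (k : ℕ) : ∀ s t : ℕ, s + t ≤ k →
    ∀ {V : Type} [DecidableEq V] (R : SimpleGraph V) (A : Finset V), ramN s t ≤ A.card →
    (∃ S ⊆ A, S.card = s ∧ R.IsClique ↑S) ∨ (∃ S ⊆ A, S.card = t ∧ Rᶜ.IsClique ↑S) := by
  induction k with
  | zero =>
    intro s t hst V _ R A _
    have hs : s = 0 := by omega
    exact Or.inl ⟨∅, Finset.empty_subset _, by simp [hs]⟩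
  | succ k ih =>
    intro s t hst V _ R A hA
    match s, t with
    | 0, t => exact Or.inl ⟨∅, Finset.empty_subset _, by simp⟩
    | s+1, 0 => exact Or.inr ⟨∅, Finset.empty_subset _, by simp⟩
    | s+1, t+1 =>
      classical
      have hA' : ramN s (t+1) + ramN (s+1) t + 1 ≤ A.card := by
        simpa [ramN] using hA
      obtain ⟨v, hv⟩ := Finset.card_pos.mp (show 0 < A.card by omega)
      set Br := (A.erase v).filter (fun x => R.Adj v x) with hBrdef
      set Bb := (A.erase v).filter (fun x => ¬ R.Adj v x) with hBbdef
      have hsplit : Br.card + Bb.card = (A.erase v).card :=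
        Finset.card_filter_add_card_filter_not _
      have herase : (A.erase v).card = A.card - 1 := Finset.card_erase_of_mem hv
      have hcase : ramN s (t+1) ≤ Br.card ∨ ramN (s+1) t ≤ Bb.card := by omega
      rcases hcase with hr | hb
      · rcases ih s (t+1) (by omega) R Br hr with ⟨S, hS, hcard, hclq⟩ | ⟨S, hS, hcard, hclq⟩
        · refine Or.inl ⟨insert v S, ?_, ?_, ?_⟩
          · intro x hx
            rcases Finset.mem_insert.mp hx with rfl | hx
            · exact hv
            · exact Finset.mem_of_mem_erase (Finset.mem_of_mem_filter x (hS hx))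
          · have hvS : v ∉ S := fun h =>
              (Finset.mem_erase.mp (Finset.mem_of_mem_filter v (hS h))).1 rfl
            rw [Finset.card_insert_of_notMem hvS, hcard]
          · rw [Finset.coe_insert]
            refine hclq.insert fun x hx _ => ?_
            exact (Finset.mem_filter.mp (hS (Finset.mem_coe.mp hx))).2
        · refine Or.inr ⟨S, fun x hx => ?_, hcard, hclq⟩
          exact Finset.mem_of_mem_erase (Finset.mem_of_mem_filter x (hS hx))
      · rcases ih (s+1) t (by omega) R Bb hb with ⟨S, hS, hcard, hclq⟩ | ⟨S, hS, hcard, hclq⟩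
        · refine Or.inl ⟨S, fun x hx => ?_, hcard, hclq⟩
          exact Finset.mem_of_mem_erase (Finset.mem_of_mem_filter x (hS hx))
        · refine Or.inr ⟨insert v S, ?_, ?_, ?_⟩
          · intro x hx
            rcases Finset.mem_insert.mp hx with rfl | hx
            · exact hv
            · exact Finset.mem_of_mem_erase (Finset.mem_of_mem_filter x (hS hx))
          · have hvS : v ∉ S := fun h =>
              (Finset.mem_erase.mp (Finset.mem_of_mem_filter v (hS h))).1 rfl
            rw [Finset.card_insert_of_notMem hvS, hcard]
          · rw [Finset.coe_insert]
            refine hclq.insert fun x hx hne => ?_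
            have hx' := hS (Finset.mem_coe.mp hx)
            exact (SimpleGraph.compl_adj _ _ _).mpr ⟨hne, (Finset.mem_filter.mp hx').2⟩

private lemma copy_of_clique {c N : ℕ} {W : Type*} [Fintype W] (K : SimpleGraph W)
    (hc : Fintype.card W ≤ c) (R : SimpleGraph (Fin N)) (S : Finset (Fin N))
    (hcard : S.card = c) (hclq : R.IsClique ↑S) : K.ContainsCopy R := by
  have hle : Fintype.card W ≤ Fintype.card ↥S := by
    rw [Fintype.card_coe, hcard]; exact hc
  obtain ⟨e⟩ := Function.Embedding.nonempty_of_card_le hle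
  refine ⟨fun w => (e w : Fin N), Subtype.val_injective.comp e.injective,
    fun _ => Set.mem_univ _, ?_⟩
  intro x y hxy
  exact hclq (Finset.mem_coe.mpr (e x).2) (Finset.mem_coe.mpr (e y).2)
    (fun h => hxy.ne (e.injective (Subtype.ext h)))

private lemma exists_maximal_indep {V : Type*} [Finite V] (G : SimpleGraph V) (I₀ : Set V)
    (h₀ : G.IsIndep I₀) : ∃ I, I₀ ⊆ I ∧ G.IsMaximalIndep I := by
  obtain ⟨I, ⟨hI, hI₀⟩, hmax⟩ := Set.Finite.exists_maximalFor Set.ncard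
    {J : Set V | G.IsIndep J ∧ I₀ ⊆ J} (Set.toFinite _) ⟨I₀, h₀, subset_rfl⟩
  refine ⟨I, hI₀, hI, fun J hJ hIJ => ?_⟩
  have h1 : I.ncard ≤ J.ncard := Set.ncard_le_ncard hIJ (Set.toFinite _)
  have h2 := hmax (j := J) ⟨hJ, hI₀.trans hIJ⟩ h1
  exact (Set.eq_of_subset_of_ncard_le hIJ h2 (Set.toFinite _)).symm

private lemma containsCopy_comap {α β W : Type*} {g : α → β} (hg : Function.Injective g)
    (K : SimpleGraph W) (R : SimpleGraph β) :
    K.ContainsCopy (R.comap g) → K.ContainsCopy R := by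
  rintro ⟨f, hf, -, hadj⟩
  exact ⟨g ∘ f, hg.comp hf, fun _ => Set.mem_univ _, fun x y h => hadj h⟩

private lemma containsCopy_comap_compl {α β W : Type*} {g : α → β} (hg : Function.Injective g)
    (K : SimpleGraph W) (R : SimpleGraph β) :
    K.ContainsCopy (R.comap g)ᶜ → K.ContainsCopy Rᶜ := by
  rintro ⟨f, hf, -, hadj⟩
  refine ⟨g ∘ f, hg.comp hf, fun _ => Set.mem_univ _, fun x y h => ?_⟩
  obtain ⟨hne, hna⟩ := (SimpleGraph.compl_adj _ _ _).mp (hadj h)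
  exact (SimpleGraph.compl_adj _ _ _).mpr ⟨fun hc => hne (hg hc), by simpa using hna⟩

private lemma ramsey2_mem {a c : ℕ} {W : Type*} [Fintype W] (G : SimpleGraph (Fin a))
    (K : SimpleGraph W) (hW : Fintype.card W ≤ c) :
    ∀ R : SimpleGraph (Fin (ramN a c)), G.ContainsCopy R ∨ K.ContainsCopy Rᶜ := by
  intro R
  rcases ramsey_step (a + c) a c le_rfl R Finset.univ (by simp) with
    ⟨S, _, hcard, hclq⟩ | ⟨S, _, hcard, hclq⟩
  · exact Or.inl (copy_of_clique G (by simp) R S hcard hclq)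
  · exact Or.inr (copy_of_clique K hW Rᶜ S hcard hclq)

private lemma ramseyD_mem {a b : ℕ} (G : SimpleGraph (Fin a)) (H : SimpleGraph (Fin b)) :
    ∀ R : SimpleGraph (Fin (ramN a b)), G.ContainsCopyOfD R ∨ H.ContainsCopy Rᶜ := by
  intro R
  classical
  rcases ramsey_step (a + b) a b le_rfl R Finset.univ (by simp) with
    ⟨S, _, hcard, hclq⟩ | ⟨S, _, hcard, hclq⟩
  · obtain ⟨I, -, hImax⟩ := exists_maximal_indep G ∅ (Set.pairwise_empty _)
    haveI : Fintype ↥(Iᶜ) := Fintype.ofFinite _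
    refine Or.inl ⟨I, hImax, copy_of_clique (G.induce Iᶜ) ?_ R S hcard hclq⟩
    have h5 := Fintype.card_le_of_injective (Subtype.val : ↥(Iᶜ) → Fin a) Subtype.val_injective
    rw [Fintype.card_fin] at h5
    exact h5
  · exact Or.inr (copy_of_clique H (by simp) Rᶜ S hcard hclq)

private def mkRed {m s : ℕ} (R₀ : SimpleGraph (Fin s)) : SimpleGraph (Fin m ⊕ Fin s) where
  Adj x y := match x, y with
    | Sum.inl _, Sum.inl _ => False
    | Sum.inl _, Sum.inr _ => True
    | Sum.inr _, Sum.inl _ => True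
    | Sum.inr i, Sum.inr j => R₀.Adj i j
  symm := by
    constructor
    rintro (x|x) (y|y) h
    · exact h.elim
    · trivial
    · trivial
    · exact h.symm
  loopless := by
    constructor
    rintro (x|x) h
    · exact h
    · exact R₀.loopless.irrefl x h

private lemma construction {a b m s : ℕ} (G : SimpleGraph (Fin a)) (H : SimpleGraph (Fin b))
    (hG : ∃ x y, G.Adj x y) (hH : H.Connected) (n : ℕ) (hm : n * b = m + 1)
    (R₀ : SimpleGraph (Fin s)) (hD : ¬ G.ContainsCopyOfD R₀) (hB : ¬ H.ContainsCopy R₀ᶜ) :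
    ∃ Red : SimpleGraph (Fin m ⊕ Fin s),
      ¬ G.ContainsCopy Red ∧ ¬ (SimpleGraph.nCopies n H).ContainsCopy Redᶜ := by
  classical
  obtain ⟨u₀⟩ := hH.nonempty
  refine ⟨mkRed R₀, fun hcopy => ?_, fun hcopy => ?_⟩
  · -- no red G
    obtain ⟨f, hf, -, hadj⟩ := hcopy
    apply hD
    have hI0 : G.IsIndep {v | ∃ i, f v = Sum.inl i} := by
      intro u hu v hv _ hGuv
      obtain ⟨i, hi⟩ := hu
      obtain ⟨j, hj⟩ := hv
      have h := hadj hGuv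
      rw [hi, hj] at h
      exact h
    obtain ⟨I, hsub, hImax⟩ := exists_maximal_indep G _ hI0
    refine ⟨I, hImax, ?_⟩
    have hright : ∀ v : ↥(Iᶜ), ∃ j, f ↑v = Sum.inr j := by
      intro v
      have hvI : (v : Fin a) ∉ I := v.2
      have hnl : ¬ ∃ i, f ↑v = Sum.inl i := fun hex => hvI (hsub hex)
      cases hfv : f ↑v with
      | inl i => exact absurd ⟨i, hfv⟩ hnl
      | inr j => exact ⟨j, rfl⟩
    choose g hg using hright
    refine ⟨g, ?_, fun _ => Set.mem_univ _, ?_⟩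
    · intro u v huv
      have : f ↑u = f ↑v := by rw [hg u, hg v, huv]
      exact Subtype.ext (hf this)
    · intro u v huv
      have h2 : G.Adj ↑u ↑v := huv
      have h3 := hadj h2
      rw [hg u, hg v] at h3
      exact h3
  · -- no blue nH
    obtain ⟨f, hf, -, hadj⟩ := hcopy
    have hside : ∀ (i : Fin n) (u v : Fin b), H.Adj u v →
        (f (i,u)).isLeft = (f (i,v)).isLeft := by
      intro i u v huv
      have h := hadj (show (SimpleGraph.nCopies n H).Adj (i,u) (i,v) from ⟨rfl, huv⟩)
      obtain ⟨-, hna⟩ := (SimpleGraph.compl_adj _ _ _).mp h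
      cases hfu : f (i,u) with
      | inl x =>
        cases hfv : f (i,v) with
        | inl y => rfl
        | inr y => rw [hfu, hfv] at hna; exact absurd trivial hna
      | inr x =>
        cases hfv : f (i,v) with
        | inl y => rw [hfu, hfv] at hna; exact absurd trivial hna
        | inr y => rfl
    have hside' : ∀ (i : Fin n) (u : Fin b), (f (i,u)).isLeft = (f (i,u₀)).isLeft := by
      intro i u
      obtain ⟨w⟩ := hH.preconnected u u₀
      induction w with
      | nil => rfl
      | cons h p ih => exact (hside i _ _ h).trans ih
    by_cases hex : ∃ i, (f (i, u₀)).isLeft = false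
    · obtain ⟨i, hi⟩ := hex
      have hr : ∀ u, ∃ j, f (i,u) = Sum.inr j := by
        intro u
        have hfa : (f (i,u)).isLeft = false := (hside' i u).trans hi
        cases hfu : f (i,u) with
        | inl x => rw [hfu] at hfa; simp at hfa
        | inr j => exact ⟨j, rfl⟩
      choose g hg using hr
      apply hB
      refine ⟨g, ?_, fun _ => Set.mem_univ _, ?_⟩
      · intro u v huv
        have hfe : f (i,u) = f (i,v) := by rw [hg u, hg v, huv]
        exact (Prod.ext_iff.mp (hf hfe)).2
      · intro u v huv
        have h := hadj (show (SimpleGraph.nCopies n H).Adj (i,u) (i,v) from ⟨rfl, huv⟩)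
        rw [hg u, hg v] at h
        obtain ⟨hne, hna⟩ := (SimpleGraph.compl_adj _ _ _).mp h
        refine (SimpleGraph.compl_adj _ _ _).mpr ⟨fun hc => hne (by rw [hc]), ?_⟩
        exact hna
    · push_neg at hex
      have hl : ∀ p : Fin n × Fin b, ∃ j, f p = Sum.inl j := by
        rintro ⟨i, u⟩
        have h1 : (f (i,u)).isLeft = true := by
          rw [hside' i u]
          cases hb : (f (i,u₀)).isLeft with
          | false => exact absurd hb (hex i)
          | true => rfl
        cases hfu : f (i,u) with
        | inl j => exact ⟨j, rfl⟩
        | inr j => rw [hfu] at h1; simp at h1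
      choose g hg using hl
      have hginj : Function.Injective g := fun p q hpq => hf (by rw [hg p, hg q, hpq])
      have hcle := Fintype.card_le_of_injective g hginj
      simp only [Fintype.card_prod, Fintype.card_fin] at hcle
      omega

/-- For `G` with at least one edge and connected `H`, for every `n ≥ 1` we
have `r(G, nH) ≥ n·|H| + r(𝒟(G), H) - 1`; in particular there is a colouring of
`K_{n·|H| + r(𝒟(G),H) - 2}` with no red `G` and no blue `nH`. -/
theorem ramsey_asym_nCopies_lower (a b : ℕ) (G : SimpleGraph (Fin a))
    (H : SimpleGraph (Fin b)) (hG : ∃ x y, G.Adj x y) (hH : H.Connected)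
    (n : ℕ) (hn : 0 < n) :
    ((n : ℤ) * b + (G.ramseyDFam H : ℤ) - 1 ≤ (G.ramsey2 (SimpleGraph.nCopies n H) : ℤ)) ∧
    ∃ Red : SimpleGraph (Fin (n * b + G.ramseyDFam H - 2)),
      ¬ G.ContainsCopy Red ∧ ¬ (SimpleGraph.nCopies n H).ContainsCopy Redᶜ := by
  classical
  obtain ⟨u₀⟩ := hH.nonempty
  have hb : 0 < b := u₀.pos
  have hnb : 0 < n * b := Nat.mul_pos hn hb
  -- the set defining r(𝒟(G), H)
  have hDdef : G.ramseyDFam H =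
      sInf {N | ∀ R : SimpleGraph (Fin N), G.ContainsCopyOfD R ∨ H.ContainsCopy Rᶜ} := rfl
  have hSDne : {N | ∀ R : SimpleGraph (Fin N), G.ContainsCopyOfD R ∨ H.ContainsCopy Rᶜ}.Nonempty :=
    ⟨ramN a b, ramseyD_mem G H⟩
  have h0 : 0 ∉ {N | ∀ R : SimpleGraph (Fin N), G.ContainsCopyOfD R ∨ H.ContainsCopy Rᶜ} := by
    intro h
    rcases h ⊥ with ⟨I, ⟨hind, -⟩, f, -, -, -⟩ | ⟨f, -, -, -⟩
    · obtain ⟨x, y, hxy⟩ := hG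
      have hxI : x ∈ I := by
        by_contra hx
        exact (f ⟨x, hx⟩).elim0
      have hyI : y ∈ I := by
        by_contra hy
        exact (f ⟨y, hy⟩).elim0
      exact hind hxI hyI hxy.ne hxy
    · exact (f u₀).elim0
  have hr1 : 1 ≤ G.ramseyDFam H := by
    rcases Nat.eq_zero_or_pos (G.ramseyDFam H) with h | h
    · rw [hDdef] at h
      exact absurd (h ▸ Nat.sInf_mem hSDne) h0
    · exact h
  have hrm : (G.ramseyDFam H - 1) ∉
      {N | ∀ R : SimpleGraph (Fin N), G.ContainsCopyOfD R ∨ H.ContainsCopy Rᶜ} := by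
    intro hmem
    have := Nat.sInf_le hmem
    rw [← hDdef] at this
    omega
  rw [Set.mem_setOf_eq] at hrm
  push_neg at hrm
  obtain ⟨R₀, hR₀⟩ := hrm
  have hD0 : ¬ G.ContainsCopyOfD R₀ := hR₀.1
  have hB0 : ¬ H.ContainsCopy R₀ᶜ := hR₀.2
  obtain ⟨Red1, hRed1, hBlue1⟩ := construction G H hG hH n
    (show n * b = (n * b - 1) + 1 by omega) R₀ hD0 hB0
  have hNeq : n * b + G.ramseyDFam H - 2 = (n * b - 1) + (G.ramseyDFam H - 1) := by omega
  set e : Fin (n * b + G.ramseyDFam H - 2) ≃ (Fin (n * b - 1) ⊕ Fin (G.ramseyDFam H - 1)) :=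
    (finCongr hNeq).trans finSumFinEquiv.symm with hedef
  have hconstr : ∃ Red : SimpleGraph (Fin (n * b + G.ramseyDFam H - 2)),
      ¬ G.ContainsCopy Red ∧ ¬ (SimpleGraph.nCopies n H).ContainsCopy Redᶜ := by
    refine ⟨Red1.comap e, fun h => hRed1 ?_, fun h => hBlue1 ?_⟩
    · exact containsCopy_comap e.injective G Red1 h
    · exact containsCopy_comap_compl e.injective (SimpleGraph.nCopies n H) Red1 h
  refine ⟨?_, hconstr⟩
  -- lower bound
  have h2def : G.ramsey2 (SimpleGraph.nCopies n H) =
      sInf {N | ∀ R : SimpleGraph (Fin N),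
        G.ContainsCopy R ∨ (SimpleGraph.nCopies n H).ContainsCopy Rᶜ} := rfl
  have hS2ne : {N | ∀ R : SimpleGraph (Fin N),
      G.ContainsCopy R ∨ (SimpleGraph.nCopies n H).ContainsCopy Rᶜ}.Nonempty :=
    ⟨ramN a (n * b), ramsey2_mem G (SimpleGraph.nCopies n H) (by simp)⟩
  have hN0 : (n * b + G.ramseyDFam H - 2) ∉ {N | ∀ R : SimpleGraph (Fin N),
      G.ContainsCopy R ∨ (SimpleGraph.nCopies n H).ContainsCopy Rᶜ} := by
    intro hmem
    obtain ⟨Red, hRed, hBlue⟩ := hconstr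
    rcases hmem Red with h | h
    · exact hRed h
    · exact hBlue h
  have hlow : ∀ M ∈ {N | ∀ R : SimpleGraph (Fin N),
      G.ContainsCopy R ∨ (SimpleGraph.nCopies n H).ContainsCopy Rᶜ},
      n * b + G.ramseyDFam H - 2 < M := by
    intro M hM
    by_contra hle
    push_neg at hle
    apply hN0
    intro R
    rcases hM (R.comap (Fin.castLE hle)) with h | h
    · exact Or.inl (containsCopy_comap (Fin.castLE_injective hle) G R h)
    · exact Or.inr (containsCopy_comap_compl (Fin.castLE_injective hle)
        (SimpleGraph.nCopies n H) R h)
  have hkey : n * b + G.ramseyDFam H - 1 ≤ G.ramsey2 (SimpleGraph.nCopies n H) := by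
    have := hlow _ (Nat.sInf_mem hS2ne)
    rw [← h2def] at this
    omega
  have hcast : ((n * b : ℕ) : ℤ) = (n : ℤ) * (b : ℤ) := by push_cast; ring
  rw [← hcast]
  omega
end
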